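/- An entire function g : ℂ → ℂ of the form g(z) = z + z^{k+1} + O(z^{k+2}) (with k ≥ 1) is not conjugate near 0 to a rotation; more precisely, the iterates g^n(z) = z + n z^{k+1} + O(z^{k+2}), so the family (g^n) is not normal (equicontinuous) on any neighborhood of 0. -/

import Mathlib

open Filter Topology Asymptotics


lemma pow_isBigO_pow_aux {a b : ℕ} (h : b ≤ a) :
    (fun z : ℂ => z ^ a) =O[𝓝 0] fun z : ℂ => z ^ b := by
  have h1 : (fun z : ℂ => z ^ (a - b)) =O[𝓝 0] (fun _ : ℂ => (1 : ℂ)) :=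
    ((continuous_pow (a - b)).tendsto 0).isBigO_one ℂ
  have := h1.mul (isBigO_refl (fun z : ℂ => z ^ b) (𝓝 0))
  refine this.congr (fun z => ?_) fun z => one_mul _
  rw [← pow_add]; congr 1; omega

lemma poly_isBigO_zero (m : ℕ) (b : ℕ → ℂ)
    (h : (fun z : ℂ => ∑ j ∈ Finset.range m, b j * z ^ j) =O[𝓝 0] fun z : ℂ => z ^ m) :
    ∀ j < m, b j = 0 := by
  intro j
  induction j using Nat.strong_induction_on with
  | _ j IH =>
    intro hj
    set R : ℂ → ℂ := fun z => ∑ i ∈ Finset.range (m - j), b (j + i) * z ^ i with hR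
    have key : ∀ z : ℂ, (∑ i ∈ Finset.range m, b i * z ^ i) = z ^ j * R z := by
      intro z
      have hm : m = j + (m - j) := by omega
      rw [hm, Finset.sum_range_add]
      have h1 : (∑ i ∈ Finset.range j, b i * z ^ i) = 0 :=
        Finset.sum_eq_zero fun i hi => by
          rw [IH i (Finset.mem_range.1 hi) (lt_trans (Finset.mem_range.1 hi) hj), zero_mul]
      rw [h1, zero_add, hR, Finset.mul_sum]
      exact Finset.sum_congr rfl fun i _ => by rw [pow_add]; ring
    obtain ⟨t, ht⟩ : ∃ t, m - j = t + 1 := ⟨m - j - 1, by omega⟩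
    have hR0 : R 0 = b j := by
      rw [hR]; simp only; rw [ht, Finset.sum_range_succ']
      simp
    have hcont : Continuous R := by
      apply continuous_finset_sum
      exact fun i _ => (continuous_const.mul (continuous_pow i))
    have t1 : Tendsto R (𝓝[≠] (0 : ℂ)) (𝓝 (b j)) := by
      rw [← hR0]
      exact (hcont.tendsto 0).mono_left nhdsWithin_le_nhds
    have t2 : Tendsto R (𝓝[≠] (0 : ℂ)) (𝓝 0) := by
      have hO : R =O[𝓝[≠] (0 : ℂ)] fun z => z ^ (m - j) := by
        obtain ⟨C, hC⟩ := h.bound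
        rw [isBigO_iff]
        refine ⟨C, ?_⟩
        filter_upwards [hC.filter_mono nhdsWithin_le_nhds, self_mem_nhdsWithin] with z hz hz0
        have hz0' : z ∈ ({0}ᶜ : Set ℂ) := hz0
        have hzne : z ≠ 0 := hz0'
        rw [key z, norm_mul, norm_pow] at hz
        have hzpos : (0:ℝ) < ‖z‖ ^ j := pow_pos (norm_pos_iff.2 hzne) j
        rw [norm_pow] at hz ⊢
        have hsplit : ‖z‖ ^ m = ‖z‖ ^ j * ‖z‖ ^ (m - j) := by
          rw [← pow_add]; congr 1; omega
        rw [hsplit] at hz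
        nlinarith [norm_nonneg (R z), pow_nonneg (norm_nonneg z) (m - j)]
      have : Tendsto (fun z : ℂ => z ^ (m - j)) (𝓝[≠] (0:ℂ)) (𝓝 0) := by
        rw [ht]
        have := ((continuous_pow (t + 1)).tendsto (0:ℂ)).mono_left
          (nhdsWithin_le_nhds (s := {(0:ℂ)}ᶜ))
        simpa using this
      exact hO.trans_tendsto this
    have := tendsto_nhds_unique t1 t2
    exact this

lemma coeff_eq_of_isBigO {f : ℂ → ℂ} {p : FormalMultilinearSeries ℂ ℂ ℂ}
    (hp : HasFPowerSeriesAt f p 0) {m : ℕ} (c : ℕ → ℂ)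
    (hf : (fun z : ℂ => f z - ∑ j ∈ Finset.range m, c j * z ^ j) =O[𝓝 0] fun z : ℂ => z ^ m) :
    ∀ j < m, p.coeff j = c j := by
  have h1 : (fun y : ℂ => f y - p.partialSum m y) =O[𝓝 0] fun y : ℂ => y ^ m := by
    have h := hp.isBigO_sub_partialSum_pow m
    simp only [zero_add] at h
    calc (fun y : ℂ => f y - p.partialSum m y)
        =O[𝓝 0] (fun y : ℂ => ‖y‖ ^ m) := h
      _ =O[𝓝 0] fun y : ℂ => y ^ m := by
          rw [isBigO_iff]
          refine ⟨1, Filter.Eventually.of_forall fun y => ?_⟩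
          simp [norm_pow, abs_of_nonneg (pow_nonneg (norm_nonneg y) m)]
  have hps : ∀ y : ℂ, p.partialSum m y = ∑ j ∈ Finset.range m, p.coeff j * y ^ j := by
    intro y
    unfold FormalMultilinearSeries.partialSum
    exact Finset.sum_congr rfl fun j _ => by
      rw [FormalMultilinearSeries.apply_eq_pow_smul_coeff, smul_eq_mul, mul_comm]
  have h2 : (fun z : ℂ => ∑ j ∈ Finset.range m, (p.coeff j - c j) * z ^ j)
      =O[𝓝 0] fun z : ℂ => z ^ m := by
    have := hf.sub h1
    refine this.congr_left fun z => ?_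
    rw [hps]
    have e : f z - (∑ j ∈ Finset.range m, c j * z ^ j)
        - (f z - ∑ j ∈ Finset.range m, p.coeff j * z ^ j)
        = (∑ j ∈ Finset.range m, p.coeff j * z ^ j)
          - ∑ j ∈ Finset.range m, c j * z ^ j := by ring
    rw [e, ← Finset.sum_sub_distrib]
    exact Finset.sum_congr rfl fun j _ => by ring
  intro j hj
  have := poly_isBigO_zero m _ h2 j hj
  exact sub_eq_zero.1 this

lemma iterate_isBigO (g : ℂ → ℂ) (k : ℕ) (hk : 1 ≤ k)
    (hform : (fun z : ℂ => g z - z - z ^ (k + 1)) =O[𝓝 0] fun z : ℂ => z ^ (k + 2)) :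
    ∀ n : ℕ, (fun z : ℂ => g^[n] z - z - (n : ℂ) * z ^ (k + 1))
        =O[𝓝 0] fun z : ℂ => z ^ (k + 2) := by
  intro n
  induction n with
  | zero =>
    have e : (fun z : ℂ => g^[0] z - z - ((0:ℕ) : ℂ) * z ^ (k + 1)) = fun _ => (0:ℂ) := by
      funext z; simp
    rw [e]
    exact isBigO_zero _ _
  | succ n IH =>
    -- basic facts
    have hO1 : (fun z : ℂ => g^[n] z) =O[𝓝 0] fun z : ℂ => z := by
      have e : (fun z : ℂ => g^[n] z)
          = fun z => (g^[n] z - z - (n : ℂ) * z ^ (k + 1)) + (z + (n : ℂ) * z ^ (k + 1)) := by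
        funext z; ring
      rw [e]
      have hp1 : (fun z : ℂ => z ^ (k + 2)) =O[𝓝 0] fun z : ℂ => z := by
        simpa using pow_isBigO_pow_aux (show 1 ≤ k + 2 by omega)
      have hp2 : (fun z : ℂ => (n : ℂ) * z ^ (k + 1)) =O[𝓝 0] fun z : ℂ => z := by
        have := (pow_isBigO_pow_aux (show 1 ≤ k + 1 by omega)).const_mul_left (n : ℂ)
        simpa using this
      have hid : (fun z : ℂ => z) =O[𝓝 0] fun z : ℂ => z := isBigO_refl _ _
      exact (IH.trans hp1).add (hid.add hp2)
    have htend : Tendsto (g^[n]) (𝓝 0) (𝓝 0) := by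
      have : Tendsto (fun z : ℂ => z) (𝓝 (0:ℂ)) (𝓝 0) := tendsto_id
      exact hO1.trans_tendsto this
    have hw : (fun z : ℂ => g^[n] z - z) =O[𝓝 0] fun z : ℂ => z ^ (k + 1) := by
      have e : (fun z : ℂ => g^[n] z - z)
          = fun z => (g^[n] z - z - (n : ℂ) * z ^ (k + 1)) + (n : ℂ) * z ^ (k + 1) := by
        funext z; ring
      rw [e]
      exact (IH.trans (pow_isBigO_pow_aux (by omega))).add
        ((isBigO_refl (fun z : ℂ => z ^ (k + 1)) _).const_mul_left (n : ℂ))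
    -- the geometric-sum cofactor
    have hS : (fun z : ℂ => ∑ i ∈ Finset.range (k + 1), (g^[n] z) ^ i * z ^ (k - i))
        =O[𝓝 0] fun z : ℂ => z ^ k := by
      rw [show (fun z : ℂ => ∑ i ∈ Finset.range (k + 1), (g^[n] z) ^ i * z ^ (k - i)) = ∑ i ∈ Finset.range (k + 1), fun z : ℂ => (g^[n] z) ^ i * z ^ (k - i) from by ext z; simp [Finset.sum_apply]]
      apply IsBigO.sum
      intro i hi
      have hik : i ≤ k := by have := Finset.mem_range.1 hi; omega
      have := (hO1.pow i).mul (isBigO_refl (fun z : ℂ => z ^ (k - i)) (𝓝 0))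
      refine this.trans (IsBigO.of_bound 1 (Filter.Eventually.of_forall fun z => ?_))
      rw [one_mul, ← pow_add, show i + (k - i) = k by omega]
    have T2 : (fun z : ℂ => (∑ i ∈ Finset.range (k + 1), (g^[n] z) ^ i * z ^ (k - i))
        * (g^[n] z - z)) =O[𝓝 0] fun z : ℂ => z ^ (k + 2) := by
      have := hS.mul hw
      refine IsBigO.trans (this.trans ?_) (pow_isBigO_pow_aux (show k + 2 ≤ 2 * k + 1 by omega))
      refine IsBigO.of_bound 1 (Filter.Eventually.of_forall fun z => ?_)
      rw [one_mul, ← pow_add, show k + (k + 1) = 2 * k + 1 by ring]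
    have T3 : (fun z : ℂ => g (g^[n] z) - g^[n] z - (g^[n] z) ^ (k + 1))
        =O[𝓝 0] fun z : ℂ => z ^ (k + 2) := by
      have := hform.comp_tendsto htend
      exact this.trans (hO1.pow (k + 2))
    have e : (fun z : ℂ => g^[n + 1] z - z - ((n + 1 : ℕ) : ℂ) * z ^ (k + 1))
        = fun z => (g^[n] z - z - (n : ℂ) * z ^ (k + 1))
          + ((∑ i ∈ Finset.range (k + 1), (g^[n] z) ^ i * z ^ (k - i)) * (g^[n] z - z)
            + (g (g^[n] z) - g^[n] z - (g^[n] z) ^ (k + 1))) := by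
      funext z
      rw [Function.iterate_succ_apply']
      have hgeom := geom_sum₂_mul (g^[n] z) z (k + 1)
      simp only [Nat.add_sub_cancel] at hgeom
      push_cast
      linear_combination -hgeom
    rw [e]
    exact IH.add (T2.add T3)

/-- A parabolic germ `g(z) = z + z^{k+1} + O(z^{k+2})` has iterates
`g^n(z) = z + n z^{k+1} + O(z^{k+2})`, and the family of iterates is not
normal (not equicontinuous) on any neighborhood of `0`. -/
theorem parabolic_not_normal
    (g : ℂ → ℂ) (hg : Differentiable ℂ g) (k : ℕ) (hk : 1 ≤ k)
    (hform : (fun z : ℂ => g z - z - z ^ (k + 1)) =O[𝓝 0] fun z : ℂ => z ^ (k + 2)) :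
    (∀ n : ℕ, (fun z : ℂ => g^[n] z - z - (n : ℂ) * z ^ (k + 1))
        =O[𝓝 0] fun z : ℂ => z ^ (k + 2)) ∧
    ∀ U ∈ 𝓝 (0 : ℂ), ¬ EquicontinuousOn (fun n : ℕ => g^[n]) U := by
  refine ⟨iterate_isBigO g k hk hform, ?_⟩
  have hiter := iterate_isBigO g k hk hform
  -- g 0 = 0
  have hg0 : g 0 = 0 := by
    obtain ⟨C, hC⟩ := hform.bound
    have h0 := hC.self_of_nhds
    simp at h0
    simpa using h0
  have hfix : ∀ n : ℕ, g^[n] 0 = 0 := fun n => Function.iterate_fixed hg0 n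
  intro U hU hEq
  have h0U : (0 : ℂ) ∈ U := mem_of_mem_nhds hU
  have hEq0 := hEq 0 h0U
  -- extract a uniform bound ‖g^[n] z‖ ≤ 1 on a small closed ball
  have hunif : ∀ᶠ z in 𝓝 (0 : ℂ), ∀ n : ℕ, dist (g^[n] 0) (g^[n] z) < 1 := by
    have := hEq0 _ (Metric.dist_mem_uniformity one_pos)
    rwa [nhdsWithin_eq_nhds.2 hU] at this
  obtain ⟨r, hr, hball⟩ := Metric.nhds_basis_closedBall.eventually_iff.1 hunif
  have hbound : ∀ z : ℂ, ‖z‖ ≤ r → ∀ n : ℕ, ‖g^[n] z‖ ≤ 1 := by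
    intro z hz n
    have hzU : z ∈ Metric.closedBall (0 : ℂ) r := by
      simpa [Metric.mem_closedBall, Complex.dist_eq] using hz
    have := hball hzU n
    rw [hfix n, dist_eq_norm, zero_sub, norm_neg] at this
    exact this.le
  -- power series of g^[n] at 0 with radius r
  set r' : NNReal := ⟨r, hr.le⟩ with hr'
  have hr'pos : 0 < r' := by exact_mod_cast hr
  -- for every n, the (k+1)-st coefficient is n, yet bounded by r⁻¹^(k+1)
  have key : ∀ n : ℕ, (n : ℝ) ≤ r⁻¹ ^ (k + 1) := by
    intro n
    have hgn : Differentiable ℂ (g^[n]) := hg.iterate n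
    have hps : HasFPowerSeriesOnBall (g^[n]) (cauchyPowerSeries (g^[n]) 0 r') 0 ⊤ :=
      hgn.hasFPowerSeriesOnBall 0 hr'pos
    set p := cauchyPowerSeries (g^[n]) 0 r' with hp
    -- coefficient computation
    have hcoeff : p.coeff (k + 1) = (n : ℂ) := by
      set c : ℕ → ℂ := fun j =>
        (if j = 1 then (1 : ℂ) else 0) + (if j = k + 1 then (n : ℂ) else 0) with hc
      have hsum : ∀ z : ℂ, (∑ j ∈ Finset.range (k + 2), c j * z ^ j)
          = z + (n : ℂ) * z ^ (k + 1) := by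
        intro z
        simp only [hc, add_mul, Finset.sum_add_distrib, ite_mul, zero_mul, one_mul,
          Finset.sum_ite_eq', Finset.mem_range]
        rw [if_pos (by omega), if_pos (by omega), pow_one]
      have hf : (fun z : ℂ => g^[n] z - ∑ j ∈ Finset.range (k + 2), c j * z ^ j)
          =O[𝓝 0] fun z : ℂ => z ^ (k + 2) := by
        refine (hiter n).congr_left fun z => ?_
        rw [hsum]; ring
      have := coeff_eq_of_isBigO hps.hasFPowerSeriesAt c hf (k + 1) (by omega)
      rw [this]
      have hne : ¬ (k + 1 = 1) := by omega
      simp [hc, hne]; omega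
    -- Cauchy estimate
    have hnorm : ‖p (k + 1)‖ ≤ r⁻¹ ^ (k + 1) := by
      have h1 := norm_cauchyPowerSeries_le (g^[n]) 0 r' (k + 1)
      have hint : (∫ θ : ℝ in (0)..2 * Real.pi, ‖g^[n] (circleMap 0 r' θ)‖)
          ≤ ∫ _ : ℝ in (0)..2 * Real.pi, (1 : ℝ) := by
        apply intervalIntegral.integral_mono_on Real.two_pi_pos.le
        · exact ((hgn.continuous.comp (continuous_circleMap 0 r')).norm).intervalIntegrable _ _
        · exact intervalIntegrable_const
        · intro θ _
          apply hbound
          have : ‖circleMap 0 (r' : ℝ) θ‖ = |(r' : ℝ)| := by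
            exact norm_circleMap_zero _ _
          rw [this, show (r' : ℝ) = r from rfl, abs_of_nonneg hr.le]
      have hπ : (2 * Real.pi)⁻¹ * ∫ θ : ℝ in (0)..2 * Real.pi, ‖g^[n] (circleMap 0 r' θ)‖ ≤ 1 := by
        rw [intervalIntegral.integral_const, smul_eq_mul, mul_one, sub_zero] at hint
        rw [inv_mul_le_iff₀ Real.two_pi_pos]
        linarith
      calc ‖p (k + 1)‖ ≤ ((2 * Real.pi)⁻¹ * ∫ θ : ℝ in (0)..2 * Real.pi,
            ‖g^[n] (circleMap 0 r' θ)‖) * |(r' : ℝ)|⁻¹ ^ (k + 1) := h1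
        _ ≤ 1 * r⁻¹ ^ (k + 1) := by
            apply mul_le_mul hπ ?_ (by positivity) zero_le_one
            rw [show (r' : ℝ) = r from rfl, abs_of_nonneg hr.le]
        _ = r⁻¹ ^ (k + 1) := one_mul _
    have : ‖p (k + 1)‖ = (n : ℝ) := by
      rw [FormalMultilinearSeries.norm_apply_eq_norm_coef, hcoeff]
      simp
    linarith [hnorm, this.symm.le.trans hnorm]
  obtain ⟨n, hn⟩ := exists_nat_gt (r⁻¹ ^ (k + 1))
  exact absurd (key n) (not_le.2 hn)
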